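/- Let R = ℂ[x,y,z], W = xyz, and let (P,δ) be the matrix factorization of the previous statement (the winding-m matrix factorization with T^A = 1). Then in the quotient coker(δ|odd) of the even part by the image of the odd part, after changing basis of the even part to {D₀, D₁−D₀, D_{2k} (1 ≤ k ≤ m), D_{2k+1} + x(yD_{2k} − D_{2k−1}) (1 ≤ k ≤ m−1)}, the cokernel decomposes as (R/⟨z⟩)·D₀ ⊕ ⊕_{k=1}^{m} (R/⟨xyz⟩)·D_{2k}. In particular, in the singularity category D_Sing(R/⟨xyz⟩) (where free modules R/⟨xyz⟩ are zero), the cokernel is isomorphic to R/⟨z⟩. -/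

import Mathlib

noncomputable section

open MvPolynomial Matrix

/-- `R = ℂ[x,y,z]`. -/
abbrev Rpoly : Type := MvPolynomial (Fin 3) ℂ

def xP : Rpoly := X 0
def yP : Rpoly := X 1
def zP : Rpoly := X 2

/-- `Aent i j` = coefficient of `D_j` in `δ(C_i)` for the winding-`m` matrix
factorization of `xyz` (with `T^A = 1`):
`δ(C₀) = z D₀`; `δ(C₁) = D₁ − D₀`;
`δ(C_{2k}) = zx(−y D_{2k} + D_{2k−1})` for `1 ≤ k ≤ m`;
`δ(C_{2k+1}) = D_{2k+1} + xy D_{2k} − x D_{2k−1}` for `1 ≤ k ≤ m−1`. -/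
def Aent : ℕ → ℕ → Rpoly := fun i j =>
  if i = 0 then (if j = 0 then zP else 0)
  else if i = 1 then (if j = 1 then 1 else if j = 0 then -1 else 0)
  else if i % 2 = 0 then
    (if j = i then -(xP * yP * zP) else if j + 1 = i then zP * xP else 0)
  else
    (if j = i then 1 else if j + 1 = i then xP * yP else if j + 2 = i then -xP else 0)

/-- The matrix of `δ` on the odd generators `C₀, …, C_{2m}`. -/
def Amat (m : ℕ) : Matrix (Fin (2 * m + 1)) (Fin (2 * m + 1)) Rpoly :=
  fun i j => Aent (i : ℕ) (j : ℕ)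

/-- The restriction of `δ` to the odd part, on coordinate vectors:
`δ(Σᵢ cᵢ Cᵢ)` has `D_j`-coordinate `Σᵢ cᵢ Aᵢⱼ`, i.e. the linear map `Aᵀ`. -/
def deltaOddBig (m : ℕ) : (Fin (2 * m + 1) → Rpoly) →ₗ[Rpoly] (Fin (2 * m + 1) → Rpoly) :=
  Matrix.toLin' (Amat m)ᵀ

-- helper sum lemmas
lemma sum_supp1 {M : Type*} [AddCommMonoid M] (n a : ℕ) (f : ℕ → M)
    (hf : ∀ i < n, i ≠ a → f i = 0) :
    ∑ i ∈ Finset.range n, f i = if a < n then f a else 0 := by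
  have h : ∀ i ∈ Finset.range n, f i = if i = a then f a else 0 := by
    intro i hi
    by_cases h1 : i = a
    · subst h1; simp
    · simp [h1, hf i (Finset.mem_range.1 hi) h1]
  rw [Finset.sum_congr rfl h, Finset.sum_ite_eq' (Finset.range n) a (fun _ => f a)]
  simp [Finset.mem_range]

lemma sum_supp2 {M : Type*} [AddCommMonoid M] (n a : ℕ) (f : ℕ → M)
    (hf : ∀ i < n, i ≠ a → i ≠ a + 1 → f i = 0) :
    ∑ i ∈ Finset.range n, f i =
      (if a < n then f a else 0) + (if a + 1 < n then f (a + 1) else 0) := by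
  have h : ∀ i ∈ Finset.range n, f i =
      (if i = a then f a else 0) + (if i = a + 1 then f (a + 1) else 0) := by
    intro i hi
    by_cases h1 : i = a
    · subst h1; rw [if_pos rfl, if_neg (by omega)]; simp
    · by_cases h2 : i = a + 1
      · subst h2; rw [if_neg (by omega), if_pos rfl]; simp
      · simp [h1, h2, hf i (Finset.mem_range.1 hi) h1 h2]
  rw [Finset.sum_congr rfl h, Finset.sum_add_distrib,
    Finset.sum_ite_eq' (Finset.range n) a (fun _ => f a),
    Finset.sum_ite_eq' (Finset.range n) (a+1) (fun _ => f (a+1))]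
  simp [Finset.mem_range]

lemma sum_supp3 {M : Type*} [AddCommMonoid M] (n a : ℕ) (f : ℕ → M)
    (hf : ∀ i < n, i ≠ a → i ≠ a + 1 → i ≠ a + 2 → f i = 0) :
    ∑ i ∈ Finset.range n, f i =
      (if a < n then f a else 0) + (if a + 1 < n then f (a + 1) else 0)
        + (if a + 2 < n then f (a + 2) else 0) := by
  have h : ∀ i ∈ Finset.range n, f i =
      (if i = a then f a else 0) + (if i = a + 1 then f (a + 1) else 0)
        + (if i = a + 2 then f (a + 2) else 0) := by
    intro i hi
    by_cases h1 : i = a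
    · subst h1; rw [if_pos rfl, if_neg (by omega), if_neg (by omega)]; simp
    · by_cases h2 : i = a + 1
      · subst h2; rw [if_neg (by omega), if_pos rfl, if_neg (by omega)]; simp
      · by_cases h3 : i = a + 2
        · subst h3; rw [if_neg (by omega), if_neg (by omega), if_pos rfl]; simp
        · simp [h1, h2, h3, hf i (Finset.mem_range.1 hi) h1 h2 h3]
  rw [Finset.sum_congr rfl h, Finset.sum_add_distrib, Finset.sum_add_distrib,
    Finset.sum_ite_eq' (Finset.range n) a (fun _ => f a),
    Finset.sum_ite_eq' (Finset.range n) (a+1) (fun _ => f (a+1)),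
    Finset.sum_ite_eq' (Finset.range n) (a+2) (fun _ => f (a+2))]
  simp [Finset.mem_range]


def evN (m t : ℕ) : (Fin (2 * m + 1) → Rpoly) →ₗ[Rpoly] Rpoly :=
  if h : t < 2 * m + 1 then LinearMap.proj (⟨t, h⟩ : Fin (2 * m + 1)) else 0

lemma evN_apply (m t : ℕ) (h : t < 2 * m + 1) (v : Fin (2 * m + 1) → Rpoly) :
    evN m t v = v ⟨t, h⟩ := by simp [evN, h]

def L0 (m : ℕ) : (Fin (2 * m + 1) → Rpoly) →ₗ[Rpoly] Rpoly :=
  evN m 0 + ∑ j ∈ Finset.range m, xP ^ j • evN m (2 * j + 1)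

def LK (m : ℕ) (k : Fin m) : (Fin (2 * m + 1) → Rpoly) →ₗ[Rpoly] Rpoly :=
  evN m (2 * (k : ℕ) + 2) -
    ∑ j ∈ Finset.range m,
      (if (k : ℕ) + 1 ≤ j then xP ^ (j - (k : ℕ)) * yP else 0) • evN m (2 * j + 1)

/-- `S k = Σ_{j=k}^{m-1} x^{j-k} v_{2j+1}`. -/
def Sv (m : ℕ) (v : Fin (2 * m + 1) → Rpoly) (k : ℕ) : Rpoly :=
  ∑ j ∈ Finset.range (m - k), xP ^ j * evN m (2 * (j + k) + 1) v

lemma Sv_top (m : ℕ) (v : Fin (2 * m + 1) → Rpoly) (k : ℕ) (hk : m ≤ k) :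
    Sv m v k = 0 := by
  simp [Sv, Nat.sub_eq_zero_of_le hk]

lemma Sv_rec (m : ℕ) (v : Fin (2 * m + 1) → Rpoly) (k : ℕ) (hk : k < m) :
    Sv m v k = evN m (2 * k + 1) v + xP * Sv m v (k + 1) := by
  have h1 : m - k = (m - (k + 1)) + 1 := by omega
  rw [Sv, h1, Finset.sum_range_succ']
  simp only [pow_zero, one_mul, zero_add]
  rw [add_comm, Sv, Finset.mul_sum]
  congr 1
  refine Finset.sum_congr rfl fun j _ => ?_
  have harg : 2 * (j + 1 + k) + 1 = 2 * (j + (k + 1)) + 1 := by omega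
  rw [harg, pow_succ]
  ring

lemma L0_eq (m : ℕ) (v : Fin (2 * m + 1) → Rpoly) :
    L0 m v = evN m 0 v + Sv m v 0 := by
  rw [L0, LinearMap.add_apply, LinearMap.sum_apply, Sv]
  simp only [Nat.sub_zero, Nat.add_zero, LinearMap.smul_apply, smul_eq_mul]

lemma LK_eq (m : ℕ) (v : Fin (2 * m + 1) → Rpoly) (k : Fin m) :
    LK m k v = evN m (2 * (k : ℕ) + 2) v - xP * yP * Sv m v ((k : ℕ) + 1) := by
  rw [LK, LinearMap.sub_apply, LinearMap.sum_apply]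
  congr 1
  simp only [LinearMap.smul_apply, smul_eq_mul, ite_mul, zero_mul]
  rw [← Finset.sum_filter]
  have hfil : (Finset.range m).filter (fun j => (k : ℕ) + 1 ≤ j)
      = Finset.Ico ((k : ℕ) + 1) m := by
    ext j; simp [Finset.mem_Ico]; omega
  rw [hfil, Finset.sum_Ico_eq_sum_range, Sv, Finset.mul_sum]
  have hm : m - ((k : ℕ) + 1) = m - (k + 1) := rfl
  refine Finset.sum_congr rfl fun j _ => ?_
  have h1 : (k : ℕ) + 1 + j - (k : ℕ) = j + 1 := by omega
  have h2 : 2 * ((k : ℕ) + 1 + j) + 1 = 2 * (j + ((k : ℕ) + 1)) + 1 := by omega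
  rw [h1, h2, pow_succ]
  ring

def phi (m : ℕ) : (Fin (2 * m + 1) → Rpoly) →ₗ[Rpoly]
    (Rpoly ⧸ (Ideal.span {zP} : Ideal Rpoly)) ×
      (Fin m → Rpoly ⧸ (Ideal.span {xP * yP * zP} : Ideal Rpoly)) :=
  ((Ideal.span {zP} : Ideal Rpoly).mkQ.comp (L0 m)).prod
    (LinearMap.pi fun k => (Ideal.span {xP * yP * zP} : Ideal Rpoly).mkQ.comp (LK m k))



lemma Aent_even (k j : ℕ) (hk : 1 ≤ k) :
    Aent (2 * k) j = if j = 2 * k then -(xP * yP * zP)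
      else if j + 1 = 2 * k then zP * xP else 0 := by
  have h0 : 2 * k ≠ 0 := by omega
  have h1 : 2 * k ≠ 1 := by omega
  simp [Aent, h0, h1, Nat.mul_mod_right]

lemma Aent_odd (k j : ℕ) (hk : 1 ≤ k) :
    Aent (2 * k + 1) j = if j = 2 * k + 1 then 1
      else if j + 1 = 2 * k + 1 then xP * yP
      else if j + 2 = 2 * k + 1 then -xP else 0 := by
  have h0 : 2 * k + 1 ≠ 0 := by omega
  have h1 : 2 * k + 1 ≠ 1 := by omega
  have h2 : (2 * k + 1) % 2 ≠ 0 := by omega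
  simp [Aent, h0, h1, h2, show k ≠ 0 by omega]

lemma Aent_support (i j : ℕ) (h1 : i ≠ j) (h2 : i ≠ j + 1) (h3 : i ≠ j + 2) :
    Aent i j = 0 := by
  simp only [Aent]
  split_ifs <;> first | rfl | omega

/-- L0 applied to row i of A lies in (z). -/
lemma L0_row (m : ℕ) (i : Fin (2 * m + 1)) :
    L0 m (fun t => Aent (i : ℕ) (t : ℕ)) ∈ Ideal.span ({zP} : Set Rpoly) := by
  set a := (i : ℕ) with ha
  have hlt : a < 2 * m + 1 := i.isLt
  have hrow : ∀ t : ℕ, t < 2 * m + 1 →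
      evN m t (fun t => Aent a (t : ℕ)) = Aent a t := by
    intro t ht; rw [evN_apply m t ht]
  rw [L0_eq, hrow 0 (by omega), Sv]
  simp only [Nat.sub_zero, Nat.add_zero]
  rcases Nat.even_or_odd a with ⟨k, hk⟩ | ⟨k, hk⟩
  · -- a = 2k
    have hk2 : a = 2 * k := by omega
    rcases Nat.eq_zero_or_pos k with hk0 | hk1
    · -- a = 0
      subst hk0
      have hz : ∀ j ∈ Finset.range m, xP ^ j * evN m (2 * j + 1)
          (fun t => Aent a (t : ℕ)) = 0 := by
        intro j hj
        rw [hrow _ (by simp at hj; omega)]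
        have : Aent a (2 * j + 1) = 0 := by
          rw [hk2]; simp [Aent]
        rw [this, mul_zero]
      rw [Finset.sum_eq_zero hz, add_zero, hk2]
      simp only [Nat.mul_zero]
      have : Aent 0 0 = zP := by simp [Aent]
      rw [this]
      exact Ideal.subset_span rfl
    · -- a = 2k, k ≥ 1
      have hkm : k ≤ m := by omega
      have hs : ∑ j ∈ Finset.range m, xP ^ j * evN m (2 * j + 1)
          (fun t => Aent a (t : ℕ)) = xP ^ (k - 1) * (zP * xP) := by
        rw [sum_supp1 m (k - 1) _ ?hf]
        · rw [if_pos (by omega), hrow _ (by omega), hk2,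
            Aent_even k _ hk1, if_neg (by omega), if_pos (by omega)]
        case hf =>
          intro j hj hne
          rw [hrow _ (by omega), hk2, Aent_even k _ hk1,
            if_neg (by omega), if_neg (by omega), mul_zero]
      rw [hs, hk2, Aent_even k 0 hk1, if_neg (by omega), if_neg (by omega), zero_add]
      exact Ideal.mem_span_singleton.2 ⟨xP ^ (k - 1) * xP, by ring⟩
  · -- a = 2k+1
    rcases Nat.eq_zero_or_pos k with hk0 | hk1
    · -- a = 1
      subst hk0
      have ha1 : a = 1 := by omega
      have hm1 : 1 ≤ m := by omega
      have hs : ∑ j ∈ Finset.range m, xP ^ j * evN m (2 * j + 1)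
          (fun t => Aent a (t : ℕ)) = 1 := by
        rw [sum_supp1 m 0 _ ?hf]
        · rw [if_pos (by omega), hrow _ (by omega), ha1]
          norm_num
          simp [Aent]
        case hf =>
          intro j hj hne
          rw [hrow _ (by omega), ha1]
          rw [Aent_support 1 (2 * j + 1) (by omega) (by omega) (by omega), mul_zero]
      rw [hs, ha1]
      have : Aent 1 0 = -1 := by simp [Aent]
      rw [this]
      simp
    · -- a = 2k+1, k ≥ 1
      have hka : a = 2 * k + 1 := by omega
      have hkm : k + 1 ≤ m := by omega
      have hs : ∑ j ∈ Finset.range m, xP ^ j * evN m (2 * j + 1)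
          (fun t => Aent a (t : ℕ)) = xP ^ (k - 1) * (-xP) + xP ^ k * 1 := by
        rw [sum_supp2 m (k - 1) _ ?hf]
        · rw [if_pos (by omega), if_pos (by omega), hrow _ (by omega),
            hrow _ (by omega), hka]
          have e1 : Aent (2 * k + 1) (2 * (k - 1) + 1) = -xP := by
            rw [Aent_odd k _ hk1, if_neg (by omega), if_neg (by omega), if_pos (by omega)]
          have e2 : Aent (2 * k + 1) (2 * (k - 1 + 1) + 1) = 1 := by
            rw [Aent_odd k _ hk1, if_pos (by omega)]
          rw [e1, e2]
          have hkx : k - 1 + 1 = k := by omega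
          rw [hkx]
        case hf =>
          intro j hj h1 h2
          rw [hrow _ (by omega), hka, Aent_odd k _ hk1,
            if_neg (by omega), if_neg (by omega), if_neg (by omega), mul_zero]
      rw [hs, hka, Aent_odd k 0 hk1, if_neg (by omega), if_neg (by omega),
        if_neg (by omega), zero_add]
      have hkk : k = (k - 1) + 1 := by omega
      have hx : xP ^ k = xP ^ (k - 1) * xP := by
        conv_lhs => rw [hkk]
        rw [pow_succ]
      have : xP ^ (k - 1) * (-xP) + xP ^ k * 1 = 0 := by
        rw [hx]; ring
      rw [this]
      exact zero_mem _

/-- LK applied to row i of A lies in (xyz). -/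
lemma LK_row (m : ℕ) (k' : Fin m) (i : Fin (2 * m + 1)) :
    LK m k' (fun t => Aent (i : ℕ) (t : ℕ)) ∈ Ideal.span ({xP * yP * zP} : Set Rpoly) := by
  set a := (i : ℕ) with ha
  set K := (k' : ℕ) + 1 with hK
  have hKm : K ≤ m := by have := k'.isLt; omega
  have hlt : a < 2 * m + 1 := i.isLt
  have hrow : ∀ t : ℕ, t < 2 * m + 1 →
      evN m t (fun t => Aent a (t : ℕ)) = Aent a t := by
    intro t ht; rw [evN_apply m t ht]
  have h2K : 2 * (k' : ℕ) + 2 = 2 * K := by omega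
  rw [LK_eq, h2K, hrow (2 * K) (by omega), Sv]
  rcases Nat.even_or_odd a with ⟨k, hk⟩ | ⟨k, hk⟩
  · -- a = 2k
    have hk2 : a = 2 * k := by omega
    rcases Nat.eq_zero_or_pos k with hk0 | hk1
    · -- a = 0
      subst hk0
      have h0 : a = 0 := by omega
      have hd : Aent a (2 * K) = 0 :=
        Aent_support _ _ (by omega) (by omega) (by omega)
      have hz : ∀ j ∈ Finset.range (m - K), xP ^ j * evN m (2 * (j + K) + 1)
          (fun t => Aent a (t : ℕ)) = 0 := by
        intro j hj
        rw [hrow _ (by simp at hj; omega),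
          Aent_support _ _ (by omega) (by omega) (by omega), mul_zero]
      rw [Finset.sum_eq_zero hz, hd]
      simp
    · -- a = 2k, k ≥ 1
      have hkm : k ≤ m := by omega
      rcases lt_trichotomy K k with hc | hc | hc
      · -- K < k
        have hd : Aent a (2 * K) = 0 := by
          rw [hk2, Aent_even k _ hk1, if_neg (by omega), if_neg (by omega)]
        have hs : ∑ j ∈ Finset.range (m - K), xP ^ j * evN m (2 * (j + K) + 1)
            (fun t => Aent a (t : ℕ)) = xP ^ (k - K - 1) * (zP * xP) := by
          rw [sum_supp1 (m - K) (k - K - 1) _ ?hf]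
          · rw [if_pos (by omega), hrow _ (by omega), hk2, Aent_even k _ hk1,
              if_neg (by omega), if_pos (by omega)]
          case hf =>
            intro j hj hne
            rw [hrow _ (by omega), hk2, Aent_even k _ hk1,
              if_neg (by omega), if_neg (by omega), mul_zero]
        rw [hs, hd]
        exact Ideal.mem_span_singleton.2 ⟨-(xP ^ (k - K - 1) * xP), by ring⟩
      · -- K = k
        -- hc : K = k
        have hd : Aent a (2 * K) = -(xP * yP * zP) := by
          rw [hk2, Aent_even k _ hk1, if_pos (by omega)]
        have hs : ∀ j ∈ Finset.range (m - K), xP ^ j * evN m (2 * (j + K) + 1)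
            (fun t => Aent a (t : ℕ)) = 0 := by
          intro j hj
          rw [hrow _ (by simp at hj; omega), hk2, Aent_even k _ hk1,
            if_neg (by omega), if_neg (by omega), mul_zero]
        rw [Finset.sum_eq_zero hs, hd, mul_zero, sub_zero]
        exact Ideal.mem_span_singleton.2 ⟨-1, by ring⟩
      · -- K > k
        have hd : Aent a (2 * K) = 0 := by
          rw [hk2, Aent_even k _ hk1, if_neg (by omega), if_neg (by omega)]
        have hs : ∀ j ∈ Finset.range (m - K), xP ^ j * evN m (2 * (j + K) + 1)
            (fun t => Aent a (t : ℕ)) = 0 := by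
          intro j hj
          rw [hrow _ (by simp at hj; omega), hk2, Aent_even k _ hk1,
            if_neg (by omega), if_neg (by omega), mul_zero]
        rw [Finset.sum_eq_zero hs, hd, mul_zero, sub_zero]
        exact zero_mem _
  · -- a = 2k+1
    have hka : a = 2 * k + 1 := by omega
    rcases Nat.eq_zero_or_pos k with hk0 | hk1
    · -- a = 1
      subst hk0
      have h1 : a = 1 := by omega
      have hd : Aent a (2 * K) = 0 :=
        Aent_support _ _ (by omega) (by omega) (by omega)
      have hz : ∀ j ∈ Finset.range (m - K), xP ^ j * evN m (2 * (j + K) + 1)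
          (fun t => Aent a (t : ℕ)) = 0 := by
        intro j hj
        rw [hrow _ (by simp at hj; omega),
          Aent_support _ _ (by omega) (by omega) (by omega), mul_zero]
      rw [Finset.sum_eq_zero hz, hd]
      simp
    · -- a = 2k+1, k ≥ 1
      have hkm : k + 1 ≤ m := by omega
      rcases lt_trichotomy K k with hc | hc | hc
      · -- K < k
        have hd : Aent a (2 * K) = 0 := by
          rw [hka, Aent_odd k _ hk1, if_neg (by omega), if_neg (by omega),
            if_neg (by omega)]
        have hs : ∑ j ∈ Finset.range (m - K), xP ^ j * evN m (2 * (j + K) + 1)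
            (fun t => Aent a (t : ℕ))
            = xP ^ (k - K - 1) * (-xP) + xP ^ (k - K) * 1 := by
          rw [sum_supp2 (m - K) (k - K - 1) _ ?hf]
          · rw [if_pos (by omega), if_pos (by omega), hrow _ (by omega),
              hrow _ (by omega), hka]
            have e1 : Aent (2 * k + 1) (2 * (k - K - 1 + K) + 1) = -xP := by
              rw [Aent_odd k _ hk1, if_neg (by omega), if_neg (by omega),
                if_pos (by omega)]
            have e2 : Aent (2 * k + 1) (2 * (k - K - 1 + 1 + K) + 1) = 1 := by
              rw [Aent_odd k _ hk1, if_pos (by omega)]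
            rw [e1, e2]
            have hkx : k - K - 1 + 1 = k - K := by omega
            rw [hkx]
          case hf =>
            intro j hj h1 h2
            rw [hrow _ (by omega), hka, Aent_odd k _ hk1,
              if_neg (by omega), if_neg (by omega), if_neg (by omega), mul_zero]
        rw [hs, hd]
        have hkk : k - K = (k - K - 1) + 1 := by omega
        have hx : xP ^ (k - K) = xP ^ (k - K - 1) * xP := by
          conv_lhs => rw [hkk]
          rw [pow_succ]
        have : (0 : Rpoly) - xP * yP * (xP ^ (k - K - 1) * (-xP) + xP ^ (k - K) * 1)
            = 0 := by rw [hx]; ring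
        rw [this]
        exact zero_mem _
      · -- K = k
        -- hc : K = k
        have hd : Aent a (2 * K) = xP * yP := by
          rw [hka, Aent_odd k _ hk1, if_neg (by omega), if_pos (by omega)]
        have hs : ∑ j ∈ Finset.range (m - K), xP ^ j * evN m (2 * (j + K) + 1)
            (fun t => Aent a (t : ℕ)) = xP ^ 0 * 1 := by
          rw [sum_supp1 (m - K) 0 _ ?hf]
          · rw [if_pos (by omega), hrow _ (by omega), hka]
            have e2 : Aent (2 * k + 1) (2 * (0 + K) + 1) = 1 := by
              rw [Aent_odd k _ hk1, if_pos (by omega)]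
            rw [e2]
          case hf =>
            intro j hj hne
            rw [hrow _ (by omega), hka, Aent_odd k _ hk1,
              if_neg (by omega), if_neg (by omega), if_neg (by omega), mul_zero]
        rw [hs, hd]
        have : xP * yP - xP * yP * (xP ^ 0 * 1) = 0 := by ring
        rw [this]
        exact zero_mem _
      · -- K > k
        have hd : Aent a (2 * K) = 0 := by
          rw [hka, Aent_odd k _ hk1, if_neg (by omega), if_neg (by omega),
            if_neg (by omega)]
        have hs : ∀ j ∈ Finset.range (m - K), xP ^ j * evN m (2 * (j + K) + 1)
            (fun t => Aent a (t : ℕ)) = 0 := by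
          intro j hj
          rw [hrow _ (by simp at hj; omega), hka, Aent_odd k _ hk1,
            if_neg (by omega), if_neg (by omega), if_neg (by omega), mul_zero]
        rw [Finset.sum_eq_zero hs, hd, mul_zero, sub_zero]
        exact zero_mem _

lemma phi_apply (m : ℕ) (v : Fin (2 * m + 1) → Rpoly) :
    phi m v = (Submodule.Quotient.mk (L0 m v),
      fun k => Submodule.Quotient.mk (LK m k v)) := rfl

lemma phi_row (m : ℕ) (i : Fin (2 * m + 1)) :
    phi m (fun t => Aent (i : ℕ) (t : ℕ)) = 0 := by
  rw [phi_apply]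
  refine Prod.ext ?_ ?_
  · show Submodule.Quotient.mk (L0 m fun t => Aent (i : ℕ) (t : ℕ)) = 0
    exact (Submodule.Quotient.mk_eq_zero _).2 (L0_row m i)
  · show (fun k => Submodule.Quotient.mk (LK m k fun t => Aent (i : ℕ) (t : ℕ))) = 0
    funext k
    exact (Submodule.Quotient.mk_eq_zero _).2 (LK_row m k i)

lemma range_le_ker (m : ℕ) :
    LinearMap.range (deltaOddBig m) ≤ LinearMap.ker (phi m) := by
  rintro _ ⟨w, rfl⟩
  rw [LinearMap.mem_ker]
  have hrep : deltaOddBig m w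
      = ∑ i : Fin (2 * m + 1), w i • (fun t : Fin (2 * m + 1) => Aent (i : ℕ) (t : ℕ)) := by
    funext t
    rw [deltaOddBig, Matrix.toLin'_apply]
    simp only [Matrix.mulVec, dotProduct, Matrix.transpose_apply, Amat,
      Finset.sum_apply, Pi.smul_apply, smul_eq_mul]
    exact Finset.sum_congr rfl fun i _ => mul_comm _ _
  rw [hrep, map_sum]
  refine Finset.sum_eq_zero fun i _ => ?_
  rw [_root_.map_smul, phi_row, smul_zero]

lemma phi_surj (m : ℕ) : Function.Surjective (phi m) := by
  rintro ⟨p, q⟩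
  obtain ⟨r, hr⟩ := Submodule.Quotient.mk_surjective _ p
  choose w hw using fun k => Submodule.Quotient.mk_surjective _ (q k)
  refine ⟨(fun t => if h : 2 ≤ (t : ℕ) ∧ (t : ℕ) % 2 = 0 then
      w ⟨(t : ℕ) / 2 - 1, by have := t.isLt; omega⟩
    else if (t : ℕ) = 0 then r else 0), ?_⟩
  set v : Fin (2 * m + 1) → Rpoly := fun t => if h : 2 ≤ (t : ℕ) ∧ (t : ℕ) % 2 = 0 then
      w ⟨(t : ℕ) / 2 - 1, by have := t.isLt; omega⟩
    else if (t : ℕ) = 0 then r else 0 with hv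
  have hodd : ∀ s : ℕ, s % 2 = 1 → ∀ h : s < 2 * m + 1, v ⟨s, h⟩ = 0 := by
    intro s hs h
    rw [hv]
    simp only []
    rw [dif_neg (by omega), if_neg (by omega)]
  have hSv : ∀ k : ℕ, Sv m v k = 0 := by
    intro k
    refine Finset.sum_eq_zero fun j hj => ?_
    have hjm : j < m - k := Finset.mem_range.1 hj
    rw [evN_apply m _ (by omega), hodd _ (by omega), mul_zero]
  rw [phi_apply]
  refine Prod.ext ?_ ?_
  · show Submodule.Quotient.mk (L0 m v) = p
    rw [L0_eq, hSv, add_zero, evN_apply m 0 (by omega)]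
    have : v ⟨0, by omega⟩ = r := by
      rw [hv]
      norm_num
    rw [this, hr]
  · show (fun k => Submodule.Quotient.mk (LK m k v)) = q
    funext k
    rw [LK_eq, hSv, mul_zero, sub_zero,
      evN_apply m _ (by have := k.isLt; omega)]
    have : v ⟨2 * (k : ℕ) + 2, by have := k.isLt; omega⟩ = w k := by
      rw [hv]
      simp only []
      rw [dif_pos (by constructor <;> omega)]
      exact congrArg w (Fin.ext (by simp only [Fin.val_mk]; omega))
    rw [this, hw]

lemma ker_le_range (m : ℕ) :
    LinearMap.ker (phi m) ≤ LinearMap.range (deltaOddBig m) := by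
  intro v hv
  rw [LinearMap.mem_ker, phi_apply] at hv
  have hv1 : L0 m v ∈ Ideal.span ({zP} : Set Rpoly) :=
    (Submodule.Quotient.mk_eq_zero _).1 (congrArg Prod.fst hv)
  have hv2 : ∀ k : Fin m, LK m k v ∈ Ideal.span ({xP * yP * zP} : Set Rpoly) :=
    fun k => (Submodule.Quotient.mk_eq_zero _).1 (congrFun (congrArg Prod.snd hv) k)
  obtain ⟨g, hg⟩ : ∃ g, L0 m v = zP * g := Ideal.mem_span_singleton.1 hv1
  have hcex : ∀ k : Fin m, ∃ u, LK m k v = xP * yP * zP * u :=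
    fun k => Ideal.mem_span_singleton.1 (hv2 k)
  choose c hcs using hcex
  set H : ℕ → Rpoly := fun k => if hk : 1 ≤ k ∧ k ≤ m then c ⟨k - 1, by omega⟩ else 0
    with hH
  have hH1 : ∀ k, 1 ≤ k → k ≤ m →
      xP * yP * zP * H k = evN m (2 * k) v - xP * yP * Sv m v k := by
    intro k h1 h2
    have e0 : H k = c ⟨k - 1, by omega⟩ := by rw [hH]; exact dif_pos ⟨h1, h2⟩
    rw [e0, ← hcs ⟨k - 1, by omega⟩, LK_eq]
    have e1 : 2 * ((⟨k - 1, by omega⟩ : Fin m) : ℕ) + 2 = 2 * k := by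
      simp only [Fin.val_mk]; omega
    have e2 : ((⟨k - 1, by omega⟩ : Fin m) : ℕ) + 1 = k := by
      simp only [Fin.val_mk]; omega
    rw [e1, e2]
  have hHtop : ∀ k, m < k → H k = 0 := by
    intro k hk; rw [hH]; exact dif_neg (by omega)
  have hEv0 : evN m 0 v = zP * g - Sv m v 0 := by
    have h := L0_eq m v
    rw [hg] at h
    rw [h]; ring
  set cN : ℕ → Rpoly := fun s =>
    if s = 0 then g + xP * H 1
    else if s % 2 = 1 then Sv m v (s / 2) + zP * xP * H (s / 2 + 1)
    else xP * H (s / 2 + 1) - H (s / 2) with hcN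
  have hc0 : cN 0 = g + xP * H 1 := by rw [hcN]; norm_num
  have hcodd : ∀ j : ℕ, cN (2 * j + 1) = Sv m v j + zP * xP * H (j + 1) := by
    intro j
    rw [hcN]
    simp only []
    rw [if_neg (by omega), if_pos (by omega)]
    have e : (2 * j + 1) / 2 = j := by omega
    rw [e]
  have hceven : ∀ j : ℕ, 1 ≤ j → cN (2 * j) = xP * H (j + 1) - H j := by
    intro j hj
    rw [hcN]
    simp only []
    rw [if_neg (by omega), if_neg (by omega)]
    have e : (2 * j) / 2 = j := by omega
    rw [e]
  refine ⟨fun s => cN (s : ℕ), ?_⟩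
  funext t
  have hms : (deltaOddBig m fun s => cN (s : ℕ)) t
      = ∑ i ∈ Finset.range (2 * m + 1), Aent i (t : ℕ) * cN i := by
    rw [deltaOddBig, Matrix.toLin'_apply,
      ← Fin.sum_univ_eq_sum_range (fun i => Aent i (t : ℕ) * cN i) (2 * m + 1)]
    simp only [Matrix.mulVec, dotProduct, Matrix.transpose_apply, Amat]
  rw [hms, sum_supp3 (2 * m + 1) (t : ℕ) _ ?hsupp]
  case hsupp =>
    intro i hi h1 h2 h3
    rw [Aent_support i (t : ℕ) (by omega) (by omega) (by omega), zero_mul]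
  rw [if_pos t.isLt]
  have hva : evN m (t : ℕ) v = v t := by rw [evN_apply m _ t.isLt]
  rw [← hva]
  have hlt := t.isLt
  rcases Nat.even_or_odd (t : ℕ) with ⟨k, hk⟩ | ⟨k, hk⟩
  · -- t = 2k
    have hk2 : (t : ℕ) = 2 * k := by omega
    rw [hk2] at hlt ⊢
    rcases Nat.eq_zero_or_pos k with hk0 | hk1
    · -- t = 0
      subst hk0
      norm_num only [Nat.mul_zero]
      have ha00 : Aent 0 0 = zP := by simp [Aent]
      rcases Nat.eq_zero_or_pos m with hm0 | hm1
      · rw [if_neg (by omega), if_neg (by omega), ha00, hc0,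
          hHtop 1 (by omega), hEv0, Sv_top m v 0 (by omega)]
        ring
      · rw [if_pos (by omega), if_pos (by omega), ha00, hc0]
        have ha10 : Aent 1 0 = -1 := by simp [Aent]
        have ha20 : Aent 2 0 = 0 := by
          rw [show (2 : ℕ) = 2 * 1 from rfl, Aent_even 1 0 (le_refl 1),
            if_neg (by omega), if_neg (by omega)]
        have hcn1 : cN 1 = Sv m v 0 + zP * xP * H 1 := by
          rw [show (1 : ℕ) = 2 * 0 + 1 from rfl, hcodd 0]
        rw [ha10, ha20, hcn1, hEv0]
        ring
    · -- t = 2k, 1 ≤ k ≤ m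
      have hkm : k ≤ m := by omega
      have hdiag : Aent (2 * k) (2 * k) = -(xP * yP * zP) := by
        rw [Aent_even k _ hk1, if_pos rfl]
      by_cases hcm : k < m
      · rw [if_pos (by omega), if_pos (by omega), hdiag]
        have ha1 : Aent (2 * k + 1) (2 * k) = xP * yP := by
          rw [Aent_odd k _ hk1, if_neg (by omega), if_pos (by omega)]
        have ha2 : Aent (2 * k + 2) (2 * k) = 0 := by
          rw [show 2 * k + 2 = 2 * (k + 1) from by ring, Aent_even (k + 1) _ (by omega),
            if_neg (by omega), if_neg (by omega)]
        have hcn2 : cN (2 * k + 2) = xP * H (k + 2) - H (k + 1) := by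
          rw [show 2 * k + 2 = 2 * (k + 1) from by ring, hceven (k + 1) (by omega)]
        rw [ha1, ha2, hceven k hk1, hcodd k, hcn2]
        linear_combination hH1 k (by omega) (by omega)
      · have hkm' : k = m := by omega
        rw [if_neg (by omega), if_neg (by omega), hdiag, hceven k hk1,
          hHtop (k + 1) (by omega)]
        linear_combination hH1 k (by omega) (by omega)
          - xP * yP * Sv_top m v k (by omega)
  · -- t = 2k+1
    have hk2 : (t : ℕ) = 2 * k + 1 := by omega
    rw [hk2] at hlt ⊢
    have hkm : k < m := by omega
    have hdiag : Aent (2 * k + 1) (2 * k + 1) = 1 := by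
      rcases Nat.eq_zero_or_pos k with h0 | h1
      · subst h0; norm_num; simp [Aent]
      · rw [Aent_odd k _ h1, if_pos rfl]
    have ha1 : Aent (2 * k + 1 + 1) (2 * k + 1) = zP * xP := by
      rw [show 2 * k + 1 + 1 = 2 * (k + 1) from by ring, Aent_even (k + 1) _ (by omega),
        if_neg (by omega), if_pos (by omega)]
    have hcn1 : cN (2 * k + 1 + 1) = xP * H (k + 2) - H (k + 1) := by
      rw [show 2 * k + 1 + 1 = 2 * (k + 1) from by ring, hceven (k + 1) (by omega)]
    rw [if_pos (by omega), hdiag, ha1, hcodd k, hcn1]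
    by_cases hcm : k + 1 < m
    · rw [if_pos (by omega)]
      have ha2 : Aent (2 * k + 1 + 2) (2 * k + 1) = -xP := by
        rw [show 2 * k + 1 + 2 = 2 * (k + 1) + 1 from by ring,
          Aent_odd (k + 1) _ (by omega), if_neg (by omega), if_neg (by omega),
          if_pos (by omega)]
      have hcn2 : cN (2 * k + 1 + 2) = Sv m v (k + 1) + zP * xP * H (k + 2) := by
        rw [show 2 * k + 1 + 2 = 2 * (k + 1) + 1 from by ring, hcodd (k + 1)]
      rw [ha2, hcn2]
      linear_combination Sv_rec m v k (by omega)
    · rw [if_neg (by omega), hHtop (k + 2) (by omega)]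
      linear_combination Sv_rec m v k (by omega) + xP * Sv_top m v (k + 1) (by omega)

/-- in the quotient `coker(δ|odd)` of the even part by the image of
the odd part (after the basis change `{D₀, D₁−D₀, D_{2k}, D_{2k+1}+x(yD_{2k}−D_{2k−1})}`)
the cokernel decomposes as `(R/⟨z⟩)·D₀ ⊕ ⊕_{k=1}^m (R/⟨xyz⟩)·D_{2k}`;
in particular (since `R/⟨xyz⟩` is free over `R/⟨W⟩`, hence zero in the
singularity category `D_Sing(R/⟨xyz⟩)`), the cokernel is isomorphic to `R/⟨z⟩`
in the singularity category. -/
theorem stmt14 (m : ℕ) :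
    Nonempty (((Fin (2 * m + 1) → Rpoly) ⧸ LinearMap.range (deltaOddBig m)) ≃ₗ[Rpoly]
      ((Rpoly ⧸ (Ideal.span {zP} : Ideal Rpoly)) ×
        (Fin m → Rpoly ⧸ (Ideal.span {xP * yP * zP} : Ideal Rpoly)))) := by
  have hker : LinearMap.ker (phi m) = LinearMap.range (deltaOddBig m) :=
    le_antisymm (ker_le_range m) (range_le_ker m)
  exact ⟨(Submodule.quotEquivOfEq _ _ hker.symm).trans
    ((phi m).quotKerEquivOfSurjective (phi_surj m))⟩

end
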